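/- Let S ⊆ ℝ^n be a convex set, let f : ℝ^n → ℝ be convex, and let g_1, …, g_m : ℝ^n → ℝ be convex. Suppose x* ∈ S satisfies g_j(x*) ≤ 0 for all j, and there exist Lagrange multipliers η_1, …, η_m ≥ 0 with η_j · g_j(x*) = 0 for all j such that x* minimizes x ↦ f(x) + Σ_{j=1}^m η_j g_j(x) over S. If p > max{η_1, …, η_m}, then every minimizer x̂ of the penalized function x ↦ f(x) + p Σ_{j=1}^m max(g_j(x), 0) over S satisfies g_j(x̂) ≤ 0 for all j and minimizes f over the set {x ∈ S : g_j(x) ≤ 0 for all j}. -/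
import Mathlib


/-- Exact penalty method (Lemma 1): if `p` exceeds every Lagrange multiplier of the
inequality constraints, then every minimizer of the penalized problem over `S` is
feasible and minimizes `f` over the feasible set. -/
theorem exact_penalty {n m : ℕ} (hm : 0 < m)
    (S : Set (Fin n → ℝ)) (hS : Convex ℝ S)
    (f : (Fin n → ℝ) → ℝ) (hf : ConvexOn ℝ S f)
    (g : Fin m → (Fin n → ℝ) → ℝ) (hg : ∀ j, ConvexOn ℝ S (g j))
    (xstar : Fin n → ℝ) (hxS : xstar ∈ S) (hxfeas : ∀ j, g j xstar ≤ 0)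
    (η : Fin m → ℝ) (hη : ∀ j, 0 ≤ η j)
    (hcomp : ∀ j, η j * g j xstar = 0)
    (hLagMin : ∀ x ∈ S,
      f xstar + ∑ j, η j * g j xstar ≤ f x + ∑ j, η j * g j x)
    (p : ℝ) (hp : ∀ j, η j < p)
    (xhat : Fin n → ℝ) (hxhatS : xhat ∈ S)
    (hxhatMin : ∀ x ∈ S,
      f xhat + p * ∑ j, max (g j xhat) 0 ≤ f x + p * ∑ j, max (g j x) 0) :
    (∀ j, g j xhat ≤ 0) ∧ ∀ x ∈ S, (∀ j, g j x ≤ 0) → f xhat ≤ f x := by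
  have h1 : ∀ x, ∀ j : Fin m, η j * g j x ≤ p * max (g j x) 0 := by
    intro x j
    rcases le_or_gt (g j x) 0 with h | h
    · rw [max_eq_right h]
      have := mul_nonpos_of_nonneg_of_nonpos (hη j) h
      linarith
    · rw [max_eq_left h.le]
      nlinarith [hη j, (hp j).le]
  have hstar0 : ∑ j, max (g j xstar) 0 = 0 :=
    Finset.sum_eq_zero (fun j _ => max_eq_right (hxfeas j))
  have hcomp0 : ∑ j, η j * g j xstar = 0 := Finset.sum_eq_zero (fun j _ => hcomp j)
  have hPx := hxhatMin xstar hxS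
  rw [hstar0] at hPx
  have hL := hLagMin xhat hxhatS
  rw [hcomp0] at hL
  have hle : ∑ j, η j * g j xhat ≤ p * ∑ j, max (g j xhat) 0 := by
    rw [Finset.mul_sum]; exact Finset.sum_le_sum (fun j _ => h1 xhat j)
  have hsum0 : ∑ j, (p * max (g j xhat) 0 - η j * g j xhat) = 0 := by
    rw [Finset.sum_sub_distrib, ← Finset.mul_sum]; linarith
  have key : ∀ j : Fin m, p * max (g j xhat) 0 - η j * g j xhat = 0 := fun j =>
    (Finset.sum_eq_zero_iff_of_nonneg
      (fun j _ => sub_nonneg.mpr (h1 xhat j))).mp hsum0 j (Finset.mem_univ j)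
  have hfeas : ∀ j, g j xhat ≤ 0 := by
    intro j
    by_contra hpos
    push_neg at hpos
    have hk := key j
    rw [max_eq_left hpos.le] at hk
    nlinarith [hp j]
  refine ⟨hfeas, fun x hx hxf => ?_⟩
  have h2 : ∑ j, max (g j xhat) 0 = 0 :=
    Finset.sum_eq_zero (fun j _ => max_eq_right (hfeas j))
  have h3 : ∑ j, max (g j x) 0 = 0 :=
    Finset.sum_eq_zero (fun j _ => max_eq_right (hxf j))
  have := hxhatMin x hx
  rw [h2, h3] at this
  linarith
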